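/- Let k be a finite field and let L₁, …, Lₙ be finitely many finite field extensions of k. Then there exists a natural number N such that for every prime number q ≥ N and every field extension M of k with [M : k] = q, there exists a surjective k-algebra homomorphism from the polynomial ring k[t] onto the product algebra ∏_{i=1}^{n} (Lᵢ ⊗_k M). -/

import Mathlib

open Module Polynomial
lemma aux_sq_le_two_pow : ∀ s : ℕ, 4 ≤ s → s * s ≤ 2 ^ s := by
  intro s
  induction s using Nat.strong_induction_on with
  | _ s ih =>
    intro hs
    match s, hs with
    | 4, _ => norm_num
    | (t+5), _ =>
      rcases Nat.lt_or_ge t 0 with h | h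
      · omega
      have h4 : 4 ≤ t + 4 := by omega
      have ihs := if h5 : 4 ≤ t + 4 then ih (t+4) (by omega) h5 else by omega
      have h1 : 2 * (t+4) + 1 ≤ (t+4) * (t+4) := by nlinarith
      have : (t+5) * (t+5) ≤ (t+4) * (t+4) + (2*(t+4)+1) := by nlinarith
      calc (t+5)*(t+5) ≤ (t+4)*(t+4) + (2*(t+4)+1) := this
        _ ≤ 2^(t+4) + 2^(t+4) := by omega
        _ = 2^(t+5) := by ring

lemma aux_numeric (r m n : ℕ) (hr : 2 ≤ r) (hm : 8 * (n + 2) + 2 ≤ m) :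
    m * n + m * Nat.sqrt (r ^ m) < r ^ m := by
  set s := m / 2 with hsdef
  set c := m - s with hcdef
  have hcs : c + s = m := by omega
  have hm2c : m ≤ 2 * c := by omega
  have hs4 : 4 * (n + 2) + 1 ≤ s := by omega
  have hsqrt : Nat.sqrt (r ^ m) ≤ r ^ c := by
    by_contra h
    push_neg at h
    have h2 : r ^ c + 1 ≤ Nat.sqrt (r ^ m) := h
    have hle := Nat.le_sqrt.mp h2
    have h3 : r ^ m ≤ r ^ (2 * c) := Nat.pow_le_pow_right (by omega) hm2c
    have h4 : r ^ (2*c) = r^c * r^c := by rw [two_mul, pow_add]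
    have h5 : (r^c+1) * (r^c+1) = r^c*r^c + 2*(r^c) + 1 := by ring
    omega
  have hrc1 : 1 ≤ r ^ c := Nat.one_le_pow _ _ (by omega)
  have hkey : m * (n + 1) < r ^ s := by
    have h2s : 2 ^ s ≤ r ^ s := Nat.pow_le_pow_left hr s
    have hss : s * s ≤ 2 ^ s := aux_sq_le_two_pow s (by omega)
    have hm3s : m ≤ 3 * s := by omega
    have h1 : m * (n+1) ≤ 3 * s * (n+1) := Nat.mul_le_mul_right _ hm3s
    have h3 : (3 * (n+1)) * s < s * s := by
      have : 3 * (n+1) < s := by omega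
      exact Nat.mul_lt_mul_of_lt_of_le this (le_refl s) (by omega)
    nlinarith
  calc m * n + m * Nat.sqrt (r ^ m)
      ≤ m * n * r ^ c + m * r ^ c :=
        add_le_add (Nat.le_mul_of_pos_right _ (by omega)) (Nat.mul_le_mul_left m hsqrt)
    _ = (m * (n+1)) * r ^ c := by ring
    _ < r ^ s * r ^ c := by
        have := Nat.mul_lt_mul_of_lt_of_le hkey (le_refl (r ^ c)) (by omega)
        exact this
    _ = r ^ m := by rw [← pow_add, add_comm, hcs]

-- number of solutions of x^N = x in a field is at most N (for N ≥ 2)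
lemma aux_card_pow_eq (F : Type*) [Field F] [Fintype F] [DecidableEq F] (N : ℕ) (hN : 2 ≤ N) :
    (Finset.univ.filter (fun x : F => x ^ N = x)).card ≤ N := by
  set p : F[X] := X ^ N - X with hp
  have hdeg : p.natDegree = N := by
    rw [hp]
    rw [natDegree_sub_eq_left_of_natDegree_lt] <;> simp [natDegree_X_pow] <;> omega
  have hp0 : p ≠ 0 := fun h => by simp [h] at hdeg; omega
  have hsub : (Finset.univ.filter (fun x : F => x ^ N = x)) ⊆ p.roots.toFinset := by
    intro x hx
    simp only [Finset.mem_filter] at hx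
    rw [Multiset.mem_toFinset, mem_roots hp0]
    simp [hp, IsRoot, sub_eq_zero, hx.2]
  calc (Finset.univ.filter (fun x : F => x ^ N = x)).card
      ≤ p.roots.toFinset.card := Finset.card_le_card hsub
    _ ≤ Multiset.card p.roots := p.roots.toFinset_card_le
    _ ≤ p.natDegree := p.card_roots'
    _ = N := hdeg

-- non-generators are few
lemma aux_card_nongen (k F : Type*) [Field k] [Fintype k] [Field F] [Algebra k F]
    [FiniteDimensional k F] [Fintype F] [DecidableEq F] :
    (Finset.univ.filter (fun x : F => (minpoly k x).natDegree ≠ finrank k F)).card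
      ≤ finrank k F * Nat.sqrt (Fintype.card k ^ finrank k F) := by
  classical
  set m := finrank k F with hm
  set r := Fintype.card k with hr
  have hr2 : 2 ≤ r := Fintype.one_lt_card
  have hm1 : 1 ≤ m := finrank_pos
  have hsub : (Finset.univ.filter (fun x : F => (minpoly k x).natDegree ≠ m)) ⊆
      m.properDivisors.biUnion (fun j => Finset.univ.filter (fun x : F => x ^ r ^ j = x)) := by
    intro x hx
    simp only [Finset.mem_filter, Finset.mem_biUnion] at hx ⊢
    set j := (minpoly k x).natDegree with hj
    have hint : IsIntegral k x := Algebra.IsIntegral.isIntegral x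
    set K := (IntermediateField.adjoin k {x} : IntermediateField k F) with hK
    have hfr : finrank k K = j := IntermediateField.adjoin.finrank hint
    refine ⟨j, ?_, ?_⟩
    · rw [Nat.mem_properDivisors]
      constructor
      · exact ⟨finrank K F, by rw [← hfr]; exact (finrank_mul_finrank k (↥K) F).symm⟩
      · exact lt_of_le_of_ne (minpoly.natDegree_le x) hx.2
    · refine ⟨Finset.mem_univ x, ?_⟩
      haveI : Finite K := Module.finite_of_finite k
      haveI : Fintype K := Fintype.ofFinite K
      have hcard : Fintype.card K = r ^ j := by
        rw [Module.card_fintype (finBasis k K)]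
        simp [hfr, hr]
      have hxK : x ∈ K := IntermediateField.mem_adjoin_simple_self k x
      have := FiniteField.pow_card (⟨x, hxK⟩ : K)
      rw [hcard] at this
      have := congrArg (Subtype.val) this
      simpa using this
  calc (Finset.univ.filter (fun x : F => (minpoly k x).natDegree ≠ m)).card
      ≤ (m.properDivisors.biUnion (fun j => Finset.univ.filter (fun x : F => x ^ r ^ j = x))).card :=
        Finset.card_le_card hsub
    _ ≤ ∑ j ∈ m.properDivisors, (Finset.univ.filter (fun x : F => x ^ r ^ j = x)).card :=
        Finset.card_biUnion_le
    _ ≤ ∑ _j ∈ m.properDivisors, Nat.sqrt (r ^ m) := by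
        apply Finset.sum_le_sum
        intro j hj
        rw [Nat.mem_properDivisors] at hj
        have hj1 : 1 ≤ j := Nat.pos_of_dvd_of_pos hj.1 (by omega)
        have h2j : 2 * j ≤ m := by
          obtain ⟨c, hc⟩ := hj.1
          rcases Nat.lt_or_ge c 2 with h | h
          · interval_cases c <;> omega
          · nlinarith
        refine le_trans (aux_card_pow_eq F (r ^ j) ?_) ?_
        · calc 2 = 2^1 := rfl
            _ ≤ r ^ j := Nat.pow_le_pow_left hr2 1 |>.trans (Nat.pow_le_pow_right (by omega) hj1)
        · rw [Nat.le_sqrt]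
          calc r ^ j * r ^ j = r ^ (2 * j) := by rw [two_mul, pow_add]
            _ ≤ r ^ m := Nat.pow_le_pow_right (by omega) h2j
    _ = m.properDivisors.card * Nat.sqrt (r ^ m) := by rw [Finset.sum_const, smul_eq_mul]
    _ ≤ m * Nat.sqrt (r ^ m) := by
        apply Nat.mul_le_mul_right
        calc m.properDivisors.card ≤ (Finset.range m).card :=
            Finset.card_le_card (fun j hj => Finset.mem_range.mpr (Nat.mem_properDivisors.mp hj).2)
          _ = m := Finset.card_range m

-- fiber of minpoly has at most finrank elements
lemma aux_card_fiber (k F : Type*) [Field k] [Field F] [Algebra k F]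
    [FiniteDimensional k F] [Fintype F] [DecidableEq F] (f : Polynomial k)
    [DecidablePred fun x : F => minpoly k x = f] :
    (Finset.univ.filter (fun x : F => minpoly k x = f)).card ≤ finrank k F := by
  classical
  rcases (Finset.univ.filter (fun x : F => minpoly k x = f)).eq_empty_or_nonempty with h | h
  · rw [h]; simpa using Nat.zero_le _
  · obtain ⟨x0, hx0⟩ := h
    simp only [Finset.mem_filter] at hx0
    have hint : IsIntegral k x0 := Algebra.IsIntegral.isIntegral x0
    have hf0 : f ≠ 0 := hx0.2 ▸ minpoly.ne_zero hint
    have hdeg : f.natDegree ≤ finrank k F := hx0.2 ▸ minpoly.natDegree_le x0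
    have hsub : (Finset.univ.filter (fun x : F => minpoly k x = f)) ⊆
        (f.map (algebraMap k F)).roots.toFinset := by
      intro x hx
      simp only [Finset.mem_filter] at hx
      rw [Multiset.mem_toFinset, mem_roots']
      constructor
      · exact (Polynomial.map_ne_zero_iff (algebraMap k F).injective).mpr hf0
      · rw [IsRoot, Polynomial.eval_map, ← Polynomial.aeval_def, ← hx.2]
        exact minpoly.aeval k x
    calc _ ≤ (f.map (algebraMap k F)).roots.toFinset.card := Finset.card_le_card hsub
      _ ≤ Multiset.card (f.map (algebraMap k F)).roots := Multiset.toFinset_card_le _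
      _ ≤ (f.map (algebraMap k F)).natDegree := Polynomial.card_roots' _
      _ ≤ f.natDegree := Polynomial.natDegree_map_le
      _ ≤ finrank k F := hdeg

-- existence of a generator avoiding a given finite set of polynomials
lemma aux_exists_gen (k F : Type*) [Field k] [Fintype k] [Field F] [Algebra k F]
    [FiniteDimensional k F] (T : Finset (Polynomial k))
    (h : finrank k F * T.card + finrank k F * Nat.sqrt (Fintype.card k ^ finrank k F)
          < Fintype.card k ^ finrank k F) :
    ∃ x : F, (minpoly k x).natDegree = finrank k F ∧ minpoly k x ∉ T := by
  classical
  haveI : Finite F := Module.finite_of_finite k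
  haveI : Fintype F := Fintype.ofFinite F
  set m := finrank k F
  set r := Fintype.card k
  have hcardF : Fintype.card F = r ^ m := by
    rw [Module.card_fintype (finBasis k F)]; simp [m, r]
  set Bad : Finset F := (Finset.univ.filter (fun x : F => (minpoly k x).natDegree ≠ m)) ∪
    T.biUnion (fun f => Finset.univ.filter (fun x : F => minpoly k x = f)) with hBad
  have hBadCard : Bad.card < Fintype.card F := by
    calc Bad.card ≤ _ + _ := Finset.card_union_le _ _
      _ ≤ m * Nat.sqrt (r ^ m) + m * T.card := by
        apply add_le_add (aux_card_nongen k F)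
        calc (T.biUnion (fun f => Finset.univ.filter (fun x : F => minpoly k x = f))).card
            ≤ ∑ f ∈ T, (Finset.univ.filter (fun x : F => minpoly k x = f)).card :=
              Finset.card_biUnion_le
          _ ≤ ∑ _f ∈ T, m := Finset.sum_le_sum (fun f _ => aux_card_fiber k F f)
          _ = m * T.card := by rw [Finset.sum_const, smul_eq_mul, mul_comm]
      _ < r ^ m := by omega
      _ = Fintype.card F := hcardF.symm
  have : ∃ x : F, x ∉ Bad := by
    by_contra hc
    push_neg at hc
    have : Bad = Finset.univ := Finset.eq_univ_iff_forall.mpr hc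
    rw [this, Finset.card_univ] at hBadCard
    omega
  obtain ⟨x, hx⟩ := this
  rw [hBad, Finset.mem_union, not_or] at hx
  obtain ⟨hx1, hx2⟩ := hx
  refine ⟨x, ?_, ?_⟩
  · by_contra hne
    exact hx1 (Finset.mem_filter.mpr ⟨Finset.mem_univ x, hne⟩)
  · intro hmem
    exact hx2 (Finset.mem_biUnion.mpr
      ⟨minpoly k x, hmem, Finset.mem_filter.mpr ⟨Finset.mem_univ x, rfl⟩⟩)

-- a generator gives a surjective aeval
lemma aux_aeval_surj (k F : Type*) [Field k] [Field F] [Algebra k F] [FiniteDimensional k F]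
    (x : F) (hx : (minpoly k x).natDegree = finrank k F) :
    Function.Surjective (Polynomial.aeval x : Polynomial k →ₐ[k] F) := by
  have hint : IsIntegral k x := Algebra.IsIntegral.isIntegral x
  have hfr : finrank k (IntermediateField.adjoin k {x} : IntermediateField k F) = finrank k F :=
    (IntermediateField.adjoin.finrank hint).trans hx
  have htop : (IntermediateField.adjoin k {x} : IntermediateField k F) = ⊤ := by
    apply IntermediateField.toSubalgebra_injective
    apply Subalgebra.toSubmodule_injective
    exact Submodule.eq_top_of_finrank_eq hfr
  rw [← AlgHom.range_eq_top, ← Algebra.adjoin_singleton_eq_range_aeval,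
    ← IntermediateField.adjoin_simple_toSubalgebra_of_isAlgebraic hint.isAlgebraic, htop]
  rfl

set_option maxHeartbeats 1000000 in
lemma aux_tensor_isField (k L M : Type*) [Field k] [Field L] [Field M]
    [Algebra k L] [Algebra k M] [FiniteDimensional k L] [FiniteDimensional k M] [Finite k]
    (h : Nat.Coprime (finrank k L) (finrank k M)) :
    IsField (TensorProduct k L M) := by
  classical
  set E := AlgebraicClosure k
  haveI : Algebra.IsAlgebraic k L := Algebra.IsAlgebraic.of_finite k L
  haveI : Algebra.IsAlgebraic k M := Algebra.IsAlgebraic.of_finite k M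
  let f : L →ₐ[k] E := IsAlgClosed.lift
  let g : M →ₐ[k] E := IsAlgClosed.lift
  set A := f.fieldRange with hA
  set B := g.fieldRange with hB
  haveI : FiniteDimensional k A :=
    (AlgEquiv.ofInjectiveField f).toLinearEquiv.finiteDimensional
  haveI : FiniteDimensional k B :=
    (AlgEquiv.ofInjectiveField g).toLinearEquiv.finiteDimensional
  have hfrA : finrank k A = finrank k L :=
    ((AlgEquiv.ofInjectiveField f).toLinearEquiv.finrank_eq).symm
  have hfrB : finrank k B = finrank k M :=
    ((AlgEquiv.ofInjectiveField g).toLinearEquiv.finrank_eq).symm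
  -- linear disjointness
  have hld : A.LinearDisjoint B := by
    apply IntermediateField.LinearDisjoint.of_finrank_coprime
    rw [hfrA, hfrB]
    exact h
  have hsup : finrank k ↥(A ⊔ B) = finrank k L * finrank k M := by
    rw [hld.finrank_sup, hfrA, hfrB]
  -- the product map
  let φ : TensorProduct k L M →ₐ[k] E := Algebra.TensorProduct.productMap f g
  have hrange : φ.range = (A ⊔ B).toSubalgebra := by
    rw [IntermediateField.sup_toSubalgebra_of_left, hA, hB,
      f.fieldRange_toSubalgebra, g.fieldRange_toSubalgebra]
    exact Algebra.TensorProduct.productMap_range f g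
  -- dimension count
  haveI : FiniteDimensional k (TensorProduct k L M) := inferInstance
  have hfrT : finrank k (TensorProduct k L M) = finrank k L * finrank k M :=
    finrank_tensorProduct
  have hrangeL : finrank k (LinearMap.range φ.toLinearMap) = finrank k (TensorProduct k L M) := by
    have heq : LinearMap.range φ.toLinearMap = Subalgebra.toSubmodule φ.range := by
      ext y
      simp [LinearMap.mem_range, AlgHom.mem_range]
    rw [heq, hrange, hfrT]
    exact hsup
  have hker : LinearMap.ker φ.toLinearMap = ⊥ := by
    have := LinearMap.finrank_range_add_finrank_ker φ.toLinearMap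
    rw [hrangeL] at this
    have h0 : finrank k (LinearMap.ker φ.toLinearMap) = 0 := by omega
    exact Submodule.finrank_eq_zero.mp h0
  have hinj : Function.Injective φ := by
    rw [show (⇑φ : TensorProduct k L M → E) = ⇑φ.toLinearMap from rfl]
    exact LinearMap.ker_eq_bot.mp hker
  haveI : IsDomain (TensorProduct k L M) := Function.Injective.isDomain φ.toRingHom hinj
  haveI : Finite (TensorProduct k L M) := Module.finite_of_finite k
  exact Finite.isField_of_domain _

-- selection of generators with pairwise distinct minimal polynomials
lemma aux_select (k : Type*) [Field k] {n : ℕ} (F : Fin n → Type*)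
    [∀ i, Field (F i)] [∀ i, Algebra k (F i)] [∀ i, FiniteDimensional k (F i)]
    (h : ∀ (i : Fin n) (T : Finset (Polynomial k)), T.card ≤ n →
      ∃ x : F i, (minpoly k x).natDegree = finrank k (F i) ∧ minpoly k x ∉ T) :
    ∃ x : ∀ i, F i, (∀ i, (minpoly k (x i)).natDegree = finrank k (F i)) ∧
      Function.Injective (fun i => minpoly k (x i)) := by
  classical
  have key : ∀ s : Finset (Fin n), ∃ x : ∀ i, F i,
      (∀ i ∈ s, (minpoly k (x i)).natDegree = finrank k (F i)) ∧
      (Set.InjOn (fun i => minpoly k (x i)) s) := by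
    intro s
    induction s using Finset.induction_on with
    | empty => exact ⟨fun i => 0, by simp, by simp [Set.InjOn]⟩
    | @insert a s ha ih =>
      obtain ⟨x, hx1, hx2⟩ := ih
      set T := s.image (fun j => minpoly k (x j)) with hT
      have hTcard : T.card ≤ n := by
        calc T.card ≤ s.card := Finset.card_image_le
          _ ≤ Fintype.card (Fin n) := Finset.card_le_univ s
          _ = n := Fintype.card_fin n
      obtain ⟨y, hy1, hy2⟩ := h a T hTcard
      have key1 : ∀ i ∈ s, minpoly k (Function.update x a y i) = minpoly k (x i) := by
        intro i hi
        have hia : i ≠ a := by rintro rfl; exact ha hi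
        rw [Function.update_of_ne hia]
      have key2 : minpoly k (Function.update x a y a) = minpoly k y := by
        rw [Function.update_self]
      refine ⟨Function.update x a y, ?_, ?_⟩
      · intro i hi
        rcases Finset.mem_insert.mp hi with h1 | h2
        · rw [h1, key2]
          exact hy1
        · rw [key1 i h2]
          exact hx1 i h2
      · intro i hi j hj hij
        have hij' : minpoly k (Function.update x a y i) = minpoly k (Function.update x a y j) :=
          hij
        simp only [Finset.coe_insert, Set.mem_insert_iff, Finset.mem_coe] at hi hj
        rcases hi with h1 | hi2 <;> rcases hj with h3 | hj2
        · exact h1.trans h3.symm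
        · exfalso
          rw [h1, key2, key1 j hj2] at hij'
          exact hy2 (by rw [hij']; exact Finset.mem_image_of_mem (fun j => minpoly k (x j)) hj2)
        · exfalso
          rw [h3, key2, key1 i hi2] at hij'
          exact hy2 (by rw [← hij']; exact Finset.mem_image_of_mem (fun j => minpoly k (x j)) hi2)
        · rw [key1 i hi2, key1 j hj2] at hij'
          exact hx2 hi2 hj2 hij'
  obtain ⟨x, hx1, hx2⟩ := key Finset.univ
  exact ⟨x, fun i => hx1 i (Finset.mem_univ i), fun i j hij =>
    hx2 (Finset.mem_coe.mpr (Finset.mem_univ i)) (Finset.mem_coe.mpr (Finset.mem_univ j)) hij⟩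
-- CRT: distinct generators give a surjection onto the product
lemma aux_pi_surj (k : Type*) [Field k] {n : ℕ} (F : Fin n → Type*)
    [∀ i, Field (F i)] [∀ i, Algebra k (F i)] [∀ i, FiniteDimensional k (F i)]
    (x : ∀ i, F i) (hdeg : ∀ i, (minpoly k (x i)).natDegree = finrank k (F i))
    (hinj : Function.Injective fun i => minpoly k (x i)) :
    Function.Surjective (Pi.algHom k F (fun i => Polynomial.aeval (x i))) := by
  classical
  intro y
  choose p hp using fun i => aux_aeval_surj k (F i) (x i) (hdeg i) (y i)
  set f : Fin n → Polynomial k := fun i => minpoly k (x i) with hf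
  have hint : ∀ i, IsIntegral k (x i) := fun i => Algebra.IsIntegral.isIntegral (x i)
  set I : Fin n → Ideal (Polynomial k) := fun i => Ideal.span {f i} with hI
  have hco : Pairwise (Function.onFun IsCoprime I) := by
    intro i j hij
    have hirr_i : Irreducible (f i) := minpoly.irreducible (hint i)
    have hirr_j : Irreducible (f j) := minpoly.irreducible (hint j)
    simp only [Function.onFun, hI, Ideal.isCoprime_span_singleton_iff]
    rw [hirr_i.coprime_iff_not_dvd]
    intro hdvd
    have hass := hirr_i.associated_of_dvd hirr_j hdvd
    have heq := Polynomial.eq_of_monic_of_associated (minpoly.monic (hint i))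
      (minpoly.monic (hint j)) hass
    exact hij (hinj heq)
  obtain ⟨pbar, hpbar⟩ := Ideal.quotientInfToPiQuotient_surj hco
    (fun i => Ideal.Quotient.mk (I i) (p i))
  obtain ⟨P, rfl⟩ := Ideal.Quotient.mk_surjective pbar
  refine ⟨P, ?_⟩
  funext i
  have h1 : Ideal.Quotient.mk (I i) P = Ideal.Quotient.mk (I i) (p i) := by
    have := congrFun hpbar i
    rwa [Ideal.quotientInfToPiQuotient_mk] at this
  have h2 : f i ∣ P - p i := by
    rw [← Ideal.mem_span_singleton]
    exact Ideal.Quotient.eq.mp h1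
  obtain ⟨c, hc⟩ := h2
  have hsub : Polynomial.aeval (x i) P - Polynomial.aeval (x i) (p i) = 0 := by
    rw [← map_sub, hc, map_mul]
    have : Polynomial.aeval (x i) (f i) = 0 := minpoly.aeval k (x i)
    rw [this, zero_mul]
  show Polynomial.aeval (x i) P = y i
  rw [sub_eq_zero.mp hsub]
  exact hp i

theorem stmt_6 (k : Type*) [Field k] [Fintype k] (n : ℕ) (L : Fin n → Type*)
    [∀ i, Field (L i)] [∀ i, Algebra k (L i)] [∀ i, FiniteDimensional k (L i)] :
    ∃ N : ℕ, ∀ q : ℕ, q.Prime → N ≤ q →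
      ∀ (M : Type*) [Field M] [Algebra k M], Module.finrank k M = q →
        ∃ φ : Polynomial k →ₐ[k] (∀ i, TensorProduct k (L i) M),
          Function.Surjective φ := by
  classical
  set D := (Finset.univ.sup fun i : Fin n => finrank k (L i)) with hD
  refine ⟨8 * (n + 2) + 2 + (D + 1), ?_⟩
  intro q hq hNq M _ _ hM
  haveI : FiniteDimensional k M := by
    apply Module.finite_of_finrank_eq_succ (n := q - 1)
    rw [hM]
    omega
  have hd : ∀ i, 0 < finrank k (L i) := fun i => finrank_pos
  have hdq : ∀ i, finrank k (L i) < q := by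
    intro i
    have h1 : finrank k (L i) ≤ D := by
      have := Finset.le_sup (f := fun i : Fin n => finrank k (L i)) (Finset.mem_univ i)
      simpa using this
    omega
  have hcop : ∀ i, Nat.Coprime (finrank k (L i)) (finrank k M) := by
    intro i
    rw [hM]
    exact ((hq.coprime_iff_not_dvd).mpr (Nat.not_dvd_of_pos_of_lt (hd i) (hdq i))).symm
  letI fld : ∀ i, Field (TensorProduct k (L i) M) :=
    fun i => (aux_tensor_isField k (L i) M (hcop i)).toField
  have hfr : ∀ i, finrank k (TensorProduct k (L i) M) = finrank k (L i) * q := by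
    intro i
    rw [finrank_tensorProduct, hM]
  have hsel : ∀ (i : Fin n) (T : Finset (Polynomial k)), T.card ≤ n →
      ∃ x : TensorProduct k (L i) M,
        (minpoly k x).natDegree = finrank k (TensorProduct k (L i) M) ∧ minpoly k x ∉ T := by
    intro i T hT
    apply aux_exists_gen
    have hr2 : 2 ≤ Fintype.card k := Fintype.one_lt_card
    set m := finrank k (TensorProduct k (L i) M) with hm
    have hmq : 8 * (n + 2) + 2 ≤ m := by
      rw [hm, hfr i]
      have := hd i
      have hq' : q ≤ finrank k (L i) * q := Nat.le_mul_of_pos_left q (hd i)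
      omega
    have hnum := aux_numeric (Fintype.card k) m n hr2 hmq
    have hTn : m * T.card ≤ m * n := Nat.mul_le_mul_left _ hT
    omega
  obtain ⟨x, hx1, hx2⟩ := aux_select k (fun i => TensorProduct k (L i) M) hsel
  exact ⟨_, aux_pi_surj k _ x hx1 hx2⟩
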